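/- For matrices A ∈ ℝ^{h×H} and B ∈ ℝ^{w×W}, define the rank-1 feature maps W_{s,t} = α_s^T β_t where α_s is the s-th row of A and β_t is the t-th row of B. Then the sum over all (s,t) of the anisotropic total variation norms satisfies: ∑_{s=1}^{h} ∑_{t=1}^{w} ‖W_{s,t}‖_TV = ‖∇_x B‖_1 · ‖A‖_1 + ‖B‖_1 · ‖∇_x A‖_1, where ∇_x computes the horizontal (column-difference) gradient of a matrix and ‖·‖_1 is the elementwise 1-norm. -/
import Mathlib


/-- Anisotropic total variation norm of a matrix in `ℝ^{(H+1)×(W+1)}`. -/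
noncomputable def tvNorm {H W : ℕ} (M : Matrix (Fin (H+1)) (Fin (W+1)) ℝ) : ℝ :=
  (∑ i : Fin H, ∑ j : Fin (W+1), |M i.succ j - M i.castSucc j|) +
  (∑ i : Fin (H+1), ∑ j : Fin W, |M i j.succ - M i j.castSucc|)

/-- Elementwise 1-norm of a matrix. -/
noncomputable def l1Norm {m n : ℕ} (M : Matrix (Fin m) (Fin n) ℝ) : ℝ :=
  ∑ i, ∑ j, |M i j|

/-- Elementwise 1-norm of the horizontal (column-difference) gradient `∇ₓ M`
(the last, zero, column of `∇ₓ M` contributes nothing). -/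
noncomputable def gradXNorm {m n : ℕ} (M : Matrix (Fin m) (Fin (n+1)) ℝ) : ℝ :=
  ∑ i, ∑ j : Fin n, |M i j.succ - M i j.castSucc|

/-- Lemma 1: the sum of the anisotropic TV norms of the rank-1 feature maps
`W_{s,t} = αₛᵀβₜ` equals `‖∇ₓB‖₁‖A‖₁ + ‖B‖₁‖∇ₓA‖₁`. -/
theorem tv_feature_maps_fused_lasso {h w H W : ℕ}
    (A : Matrix (Fin h) (Fin (H+1)) ℝ) (B : Matrix (Fin w) (Fin (W+1)) ℝ) :
    ∑ s : Fin h, ∑ t : Fin w, tvNorm (Matrix.of fun i j => A s i * B t j)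
      = gradXNorm B * l1Norm A + l1Norm B * gradXNorm A := by
  simp only [tvNorm, l1Norm, gradXNorm, Matrix.of_apply, Finset.sum_add_distrib,
    ← sub_mul, ← mul_sub, abs_mul, ← Finset.sum_mul, ← Finset.mul_sum]
  rw [Finset.sum_comm]
  ring_nf
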